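/- Let 0 < q < 1 and let f : ℕ → ℝ with f(n) → ∞ as n → ∞, and let X_n ∼ KB(n, q^{−n−f(n)}, q). Then n − X_n converges in distribution to the point measure at 0; that is, P(n − X_n = 0) → 1 and P(n − X_n = x) → 0 for every fixed integer x ≥ 1. -/

import Mathlib

open Filter Finset

/-- The q-shifted factorial `(z;q)_n = ∏_{i=0}^{n-1} (1 - z q^i)`. -/
noncomputable def qPoch (q z : ℝ) (n : ℕ) : ℝ := ∏ i ∈ range n, (1 - z * q ^ i)

/-- The q-binomial coefficient `[n choose k]_q = (q;q)_n / ((q;q)_k (q;q)_{n-k})`. -/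
noncomputable def qBinom (q : ℝ) (n k : ℕ) : ℝ := qPoch q q n / (qPoch q q k * qPoch q q (n - k))

lemma kb_one_sub_prod {ι : Type*} (s : Finset ι) (b : ι → ℝ) (h0 : ∀ i ∈ s, 0 ≤ b i)
    (h1 : ∀ i ∈ s, b i ≤ 1) : 1 - ∑ i ∈ s, b i ≤ ∏ i ∈ s, (1 - b i) := by
  induction s using Finset.cons_induction with
  | empty => simp
  | cons a s ha ih =>
    rw [Finset.sum_cons, Finset.prod_cons]
    have h0a : 0 ≤ b a := h0 a (Finset.mem_cons_self a s)
    have h1a : b a ≤ 1 := h1 a (Finset.mem_cons_self a s)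
    have ih' := ih (fun i hi => h0 i (Finset.mem_cons_of_mem hi))
      (fun i hi => h1 i (Finset.mem_cons_of_mem hi))
    have hS : 0 ≤ ∑ i ∈ s, b i :=
      Finset.sum_nonneg fun i hi => h0 i (Finset.mem_cons_of_mem hi)
    nlinarith [ih', h0a, h1a, hS]

lemma kb_qPoch_pos {q : ℝ} (hq0 : 0 < q) (hq1 : q < 1) (n : ℕ) : 0 < qPoch q q n := by
  refine Finset.prod_pos fun i _ => ?_
  have h1 : q * q ^ i ≤ q * 1 := by
    gcongr
    exact pow_le_one₀ hq0.le hq1.le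
  linarith

lemma kb_qPoch_le_one {q : ℝ} (hq0 : 0 < q) (hq1 : q < 1) (n : ℕ) : qPoch q q n ≤ 1 := by
  refine Finset.prod_le_one (fun i _ => ?_) (fun i _ => ?_)
  · have h1 : q * q ^ i ≤ q * 1 := by
      gcongr
      exact pow_le_one₀ hq0.le hq1.le
    linarith
  · nlinarith [pow_pos hq0 i]

lemma kb_geom {q : ℝ} (hq0 : 0 < q) (hq1 : q < 1) (n : ℕ) :
    ∑ i ∈ range n, q ^ i ≤ 1 / (1 - q) := by
  rw [geom_sum_eq hq1.ne n,
    show (q ^ n - 1) / (q - 1) = (1 - q ^ n) / (1 - q) by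
      rw [div_eq_div_iff (by linarith) (by linarith)]; ring]
  rw [div_le_div_iff₀ (by linarith) (by linarith)]
  nlinarith [pow_pos hq0 n]

lemma kb_qPoch_ge {q : ℝ} (hq0 : 0 < q) (hq1 : q < 1) (n : ℕ) :
    Real.exp (-(q / (1 - q) ^ 2)) ≤ qPoch q q n := by
  have hq1' : (0:ℝ) < 1 - q := by linarith
  have step : ∀ i : ℕ, Real.exp (-(q * q ^ i / (1 - q))) ≤ 1 - q * q ^ i := by
    intro i
    set t := q * q ^ i with ht
    have ht0 : 0 < t := by positivity
    have htq : t ≤ q := by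
      have : q * q ^ i ≤ q * 1 := by
        gcongr
        exact pow_le_one₀ hq0.le hq1.le
      simpa [ht] using this
    have hs := Real.add_one_le_exp (t / (1 - q))
    have hmul : Real.exp (-(t / (1 - q))) * Real.exp (t / (1 - q)) = 1 := by
      rw [← Real.exp_add]; simp
    have he1 : 0 < Real.exp (-(t / (1 - q))) := Real.exp_pos _
    have key : (1 - t) * (1 + t / (1 - q)) ≥ 1 := by
      rw [ge_iff_le]
      have h1 : 0 ≤ t * (q - t) / (1 - q) :=
        div_nonneg (mul_nonneg ht0.le (by linarith)) hq1'.le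
      have h2 : 1 + t / (1 - q) = (1 - q + t) / (1 - q) := by field_simp
      rw [h2, ← sub_nonneg,
        show (1 - t) * ((1 - q + t) / (1 - q)) - 1 = t * (q - t) / (1 - q) by
          field_simp; ring]
      exact h1
    nlinarith [he1, hs, hmul, Real.exp_pos (t / (1 - q))]
  calc Real.exp (-(q / (1 - q) ^ 2))
      ≤ Real.exp (-((∑ i ∈ range n, q * q ^ i) / (1 - q))) := by
        apply Real.exp_le_exp.mpr
        have hsum : ∑ i ∈ range n, q * q ^ i ≤ q / (1 - q) := by
          rw [← Finset.mul_sum]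
          have := kb_geom hq0 hq1 n
          calc q * ∑ i ∈ range n, q ^ i ≤ q * (1 / (1 - q)) := by gcongr
            _ = q / (1 - q) := by ring
        have hsum' : (∑ i ∈ range n, q * q ^ i) * (1 - q) ≤ q := by
          rwa [← le_div_iff₀ hq1']
        rw [neg_le_neg_iff, div_le_div_iff₀ hq1' (by positivity)]
        nlinarith [hsum', hq1', Finset.sum_nonneg (fun i (_ : i ∈ range n) =>
          (mul_pos hq0 (pow_pos hq0 i)).le)]
    _ ≤ ∏ i ∈ range n, (1 - q * q ^ i) := by
        rw [show -((∑ i ∈ range n, q * q ^ i) / (1 - q))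
            = ∑ i ∈ range n, -(q * q ^ i / (1 - q)) by
          rw [Finset.sum_neg_distrib, ← Finset.sum_div]]
        rw [Real.exp_sum]
        exact Finset.prod_le_prod (fun i _ => (Real.exp_pos _).le) (fun i _ => step i)
    _ = qPoch q q n := rfl

lemma kb_qBinom_le {q : ℝ} (hq0 : 0 < q) (hq1 : q < 1) (n k : ℕ) :
    qBinom q n k ≤ (Real.exp (-(q / (1 - q) ^ 2)) * Real.exp (-(q / (1 - q) ^ 2)))⁻¹ := by
  have hc : 0 < Real.exp (-(q / (1 - q) ^ 2)) := Real.exp_pos _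
  rw [qBinom, ← one_div]
  apply div_le_div₀ (by norm_num) (kb_qPoch_le_one hq0 hq1 n) (by positivity)
  exact mul_le_mul (kb_qPoch_ge hq0 hq1 k) (kb_qPoch_ge hq0 hq1 (n - k)) hc.le
    (kb_qPoch_pos hq0 hq1 k).le

lemma kb_qBinom_pos {q : ℝ} (hq0 : 0 < q) (hq1 : q < 1) (n k : ℕ) : 0 < qBinom q n k :=
  div_pos (kb_qPoch_pos hq0 hq1 n)
    (mul_pos (kb_qPoch_pos hq0 hq1 k) (kb_qPoch_pos hq0 hq1 (n - k)))

/-- The probability `P(X = x)` for `X ∼ KB(n, θ, q)`, `0 ≤ x ≤ n`. -/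
noncomputable def kbProbN (q θ : ℝ) (n x : ℕ) : ℝ :=
  qBinom q n x * θ ^ x * q ^ (x * (x - 1) / 2) / ∏ i ∈ range n, (1 + θ * q ^ i)

/-- If `X_n ∼ KB(n, q^{-n-f(n)}, q)` with `f(n) → ∞`, then `n - X_n`
converges in distribution to the point measure at `0`: `P(n - X_n = 0) → 1` and
`P(n - X_n = x) → 0` for every fixed integer `x ≥ 1`. -/
theorem kemp_superexponential_param_degenerate (q : ℝ) (hq0 : 0 < q) (hq1 : q < 1)
    (f : ℕ → ℝ) (hf : Tendsto f atTop atTop) :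
    Tendsto (fun n : ℕ => kbProbN q (q ^ (-(n : ℝ) - f n)) n n) atTop (nhds 1) ∧
      ∀ x : ℕ, 1 ≤ x →
        Tendsto (fun n : ℕ => kbProbN q (q ^ (-(n : ℝ) - f n)) n (n - x)) atTop (nhds 0) := by
  have hq1' : (0:ℝ) < 1 - q := by linarith
  set c := Real.exp (-(q / (1 - q) ^ 2)) with hc
  have hcpos : 0 < c := Real.exp_pos _
  have hrt : Tendsto (fun n : ℕ => q ^ (f n)) atTop (nhds 0) :=
    (tendsto_rpow_atTop_of_base_lt_one q (by linarith) hq1).comp hf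
  constructor
  · -- Part 1
    have hform : ∀ n : ℕ, kbProbN q (q ^ (-(n : ℝ) - f n)) n n
        = ∏ i ∈ range n, (q ^ (-(n : ℝ) - f n) * q ^ i
            / (1 + q ^ (-(n : ℝ) - f n) * q ^ i)) := by
      intro n
      set θ := q ^ (-(n : ℝ) - f n) with hθ
      have hB : qBinom q n n = 1 := by
        rw [qBinom, Nat.sub_self, show qPoch q q 0 = 1 from by simp [qPoch], mul_one,
          div_self (kb_qPoch_pos hq0 hq1 n).ne']
      rw [kbProbN, hB, one_mul, Finset.prod_div_distrib]
      congr 1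
      rw [Finset.prod_mul_distrib, Finset.prod_const, Finset.prod_pow_eq_pow_sum,
        Finset.sum_range_id, Finset.card_range]
    have hθpos : ∀ n : ℕ, (0:ℝ) < q ^ (-(n : ℝ) - f n) :=
      fun n => Real.rpow_pos_of_pos hq0 _
    have hle : ∀ n : ℕ, kbProbN q (q ^ (-(n : ℝ) - f n)) n n ≤ 1 := by
      intro n
      rw [hform n]
      refine Finset.prod_le_one (fun i _ => ?_) (fun i _ => ?_)
      · have h1 : (0:ℝ) < q ^ (-(n : ℝ) - f n) * q ^ i := by
          have := hθpos n; positivity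
        positivity
      · have h1 : (0:ℝ) < q ^ (-(n : ℝ) - f n) * q ^ i := by
          have := hθpos n; positivity
        rw [div_le_one (by linarith)]
        linarith
    have hge : ∀ n : ℕ, 1 - q ^ (f n) * (q / (1 - q))
        ≤ kbProbN q (q ^ (-(n : ℝ) - f n)) n n := by
      intro n
      rw [hform n]
      set θ := q ^ (-(n : ℝ) - f n) with hθ
      have hθp : (0:ℝ) < θ := hθpos n
      have hterm : ∀ i ∈ range n, θ * q ^ i / (1 + θ * q ^ i)
          = 1 - 1 / (1 + θ * q ^ i) := by
        intro i _
        have h1 : (0:ℝ) < θ * q ^ i := by positivity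
        field_simp
        ring
      rw [Finset.prod_congr rfl hterm]
      have hb0 : ∀ i ∈ range n, (0:ℝ) ≤ 1 / (1 + θ * q ^ i) := by
        intro i _
        have h1 : (0:ℝ) < θ * q ^ i := by positivity
        positivity
      have hb1 : ∀ i ∈ range n, 1 / (1 + θ * q ^ i) ≤ 1 := by
        intro i _
        have h1 : (0:ℝ) < θ * q ^ i := by positivity
        rw [div_le_one (by linarith)]
        linarith
      refine le_trans ?_ (kb_one_sub_prod (range n) _ hb0 hb1)
      have hsum : ∑ i ∈ range n, 1 / (1 + θ * q ^ i) ≤ q ^ (f n) * (q / (1 - q)) := by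
        have hptw : ∀ i ∈ range n, 1 / (1 + θ * q ^ i) ≤ q ^ (f n) * q ^ (n - i) := by
          intro i hi
          have hin : i < n := Finset.mem_range.mp hi
          have ha : θ * q ^ i = q ^ ((-(n : ℝ) - f n) + i) := by
            rw [hθ, ← Real.rpow_natCast q i, ← Real.rpow_add hq0]
          have h1 : (0:ℝ) < θ * q ^ i := by positivity
          have h2 : 1 / (1 + θ * q ^ i) ≤ 1 / (θ * q ^ i) :=
            one_div_le_one_div_of_le h1 (by linarith)
          refine h2.trans_eq ?_
          rw [ha, one_div, ← Real.rpow_neg hq0.le,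
            show -((-(n : ℝ) - f n) + i) = f n + ((n : ℝ) - i) by ring,
            Real.rpow_add hq0,
            show (n : ℝ) - (i : ℝ) = ((n - i : ℕ) : ℝ) by
              rw [Nat.cast_sub hin.le],
            Real.rpow_natCast]
        calc ∑ i ∈ range n, 1 / (1 + θ * q ^ i)
            ≤ ∑ i ∈ range n, q ^ (f n) * q ^ (n - i) := Finset.sum_le_sum hptw
          _ = q ^ (f n) * ∑ i ∈ range n, q ^ (n - i) := by rw [← Finset.mul_sum]
          _ ≤ q ^ (f n) * (q / (1 - q)) := by
              have hrefl : ∑ i ∈ range n, q ^ (n - i) = ∑ j ∈ range n, q ^ (j + 1) := by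
                rw [← Finset.sum_range_reflect (fun j => q ^ (j + 1)) n]
                exact Finset.sum_congr rfl fun i hi => by
                  congr 1
                  have := Finset.mem_range.mp hi
                  omega
              have hgeo : ∑ j ∈ range n, q ^ (j + 1) ≤ q / (1 - q) := by
                have : ∑ j ∈ range n, q ^ (j + 1) = (∑ j ∈ range n, q ^ j) * q := by
                  rw [Finset.sum_mul]
                  exact Finset.sum_congr rfl fun j _ => pow_succ q j
                rw [this]
                calc (∑ j ∈ range n, q ^ j) * q ≤ (1 / (1 - q)) * q := by
                      gcongr
                      exact kb_geom hq0 hq1 n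
                  _ = q / (1 - q) := by ring
              rw [hrefl]
              gcongr
      linarith
    refine tendsto_of_tendsto_of_tendsto_of_le_of_le ?_ tendsto_const_nhds hge hle
    have h1 : Tendsto (fun n : ℕ => 1 - q ^ (f n) * (q / (1 - q))) atTop
        (nhds (1 - 0 * (q / (1 - q)))) :=
      (tendsto_const_nhds (x := (1:ℝ))).sub (hrt.mul_const (q / (1 - q)))
    simpa using h1
  · -- Part 2
    intro x hx
    have hbound : ∀ n : ℕ, x ≤ n → kbProbN q (q ^ (-(n : ℝ) - f n)) n (n - x)
        ≤ (c * c)⁻¹ * (q ^ (f n)) ^ x := by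
      intro n hn
      set θ := q ^ (-(n : ℝ) - f n) with hθ
      have hθp : (0:ℝ) < θ := Real.rpow_pos_of_pos hq0 _
      have hD : (0:ℝ) < ∏ i ∈ range n, (1 + θ * q ^ i) :=
        Finset.prod_pos fun i _ => by positivity
      rw [kbProbN, div_le_iff₀ hD]
      set m := n - x with hmdef
      have hm : m + x = n := Nat.sub_add_cancel hn
      have hA : θ ^ m * q ^ (m * (m - 1) / 2) = ∏ i ∈ range m, (θ * q ^ i) := by
        rw [Finset.prod_mul_distrib, Finset.prod_const, Finset.prod_pow_eq_pow_sum,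
          Finset.sum_range_id, Finset.card_range]
      have hsplit : ∏ i ∈ range n, (θ * q ^ i)
          = (∏ i ∈ range m, (θ * q ^ i)) * ∏ i ∈ range x, (θ * q ^ (m + i)) := by
        rw [← hm, Finset.prod_range_add]
      have hone : 1 ≤ (q ^ (f n)) ^ x * ∏ i ∈ range x, (θ * q ^ (m + i)) := by
        have hR : ∏ i ∈ range x, (θ * q ^ (m + i))
            = q ^ (∑ i ∈ range x, ((-(n : ℝ) - f n) + ((m + i : ℕ) : ℝ))) := by
          rw [Real.rpow_sum_of_pos hq0]
          exact Finset.prod_congr rfl fun i _ => by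
            rw [hθ, ← Real.rpow_natCast q (m + i), ← Real.rpow_add hq0]
        have hP : (q ^ (f n)) ^ x = q ^ (f n * (x : ℝ)) := by
          rw [Real.rpow_mul hq0.le, Real.rpow_natCast]
        rw [hR, hP, ← Real.rpow_add hq0]
        apply Real.one_le_rpow_of_pos_of_le_one_of_nonpos hq0 hq1.le
        have hsum_eval : ∑ i ∈ range x, ((-(n : ℝ) - f n) + ((m + i : ℕ) : ℝ))
            = (x : ℝ) * (-(n : ℝ) - f n + (m : ℝ)) + ∑ i ∈ range x, (i : ℝ) := by
          simp_rw [show ∀ i : ℕ, ((-(n : ℝ) - f n) + ((m + i : ℕ) : ℝ))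
              = ((-(n : ℝ) - f n + (m : ℝ)) + (i : ℝ)) from fun i => by push_cast; ring]
          rw [Finset.sum_add_distrib, Finset.sum_const, Finset.card_range, nsmul_eq_mul]
        have hS : ∑ i ∈ range x, (i : ℝ) ≤ (x : ℝ) * (x : ℝ) := by
          calc ∑ i ∈ range x, (i : ℝ) ≤ ∑ i ∈ range x, (x : ℝ) :=
                Finset.sum_le_sum fun i hi => by
                  exact_mod_cast (Finset.mem_range.mp hi).le
            _ = (x : ℝ) * (x : ℝ) := by
                rw [Finset.sum_const, Finset.card_range, nsmul_eq_mul]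
        have hmr : (m : ℝ) = (n : ℝ) - (x : ℝ) := by
          have : ((m : ℕ) : ℝ) + (x : ℝ) = (n : ℝ) := by exact_mod_cast congrArg Nat.cast hm
          linarith
        rw [hsum_eval, hmr]
        nlinarith [hS]
      have h2 : θ ^ m * q ^ (m * (m - 1) / 2)
          ≤ (q ^ (f n)) ^ x * ∏ i ∈ range n, (1 + θ * q ^ i) := by
        rw [hA]
        have step1 : ∏ i ∈ range m, (θ * q ^ i)
            ≤ (q ^ (f n)) ^ x * ∏ i ∈ range n, (θ * q ^ i) := by
          rw [hsplit, show (q ^ (f n)) ^ x * ((∏ i ∈ range m, (θ * q ^ i))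
              * ∏ i ∈ range x, (θ * q ^ (m + i)))
              = (∏ i ∈ range m, (θ * q ^ i))
              * ((q ^ (f n)) ^ x * ∏ i ∈ range x, (θ * q ^ (m + i))) by ring]
          exact le_mul_of_one_le_right
            (Finset.prod_nonneg fun i _ => by positivity) hone
        refine step1.trans (mul_le_mul_of_nonneg_left ?_ (by positivity))
        exact Finset.prod_le_prod (fun i _ => mul_nonneg hθp.le (pow_pos hq0 i).le)
          (fun i _ => by linarith [pow_pos hq0 i, mul_pos hθp (pow_pos hq0 i)])
      calc qBinom q n m * θ ^ m * q ^ (m * (m - 1) / 2)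
          = qBinom q n m * (θ ^ m * q ^ (m * (m - 1) / 2)) := by ring
        _ ≤ (c * c)⁻¹ * ((q ^ (f n)) ^ x * ∏ i ∈ range n, (1 + θ * q ^ i)) := by
            apply mul_le_mul (kb_qBinom_le hq0 hq1 n m) h2 (by positivity) (by positivity)
        _ = (c * c)⁻¹ * (q ^ (f n)) ^ x * ∏ i ∈ range n, (1 + θ * q ^ i) := by ring
    have hP0 : ∀ n : ℕ, 0 ≤ kbProbN q (q ^ (-(n : ℝ) - f n)) n (n - x) := by
      intro n
      have hθp : (0:ℝ) < q ^ (-(n : ℝ) - f n) := Real.rpow_pos_of_pos hq0 _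
      rw [kbProbN]
      apply div_nonneg
      · exact mul_nonneg (mul_nonneg (kb_qBinom_pos hq0 hq1 _ _).le (by positivity))
          (by positivity)
      · exact Finset.prod_nonneg fun i _ => by positivity
    have hlim : Tendsto (fun n : ℕ => (c * c)⁻¹ * (q ^ (f n)) ^ x) atTop (nhds 0) := by
      have := (hrt.pow x).const_mul ((c * c)⁻¹)
      simpa [zero_pow (show x ≠ 0 by omega)] using this
    refine tendsto_of_tendsto_of_tendsto_of_le_of_le' tendsto_const_nhds hlim
      (Eventually.of_forall hP0) ?_
    exact (eventually_ge_atTop x).mono hbound
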